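/- Let V ∈ ℝ^{n×n} be orthogonal and let 0 < r < 1 be such that ‖V − I‖₂ < r. Then every complex eigenvalue λ of V satisfies |λ| = 1 and |arg(λ)| ≤ arctan( r·√(1 − r²/4) / (1 − r²/2) ) < r·√(1 − r²/4) / (1 − r²/2), where arg(λ) ∈ (−π, π] denotes the principal argument. -/

import Mathlib

open Matrix

noncomputable def sNorm {m n : Type*} [Fintype m] [Fintype n] [DecidableEq n]
    (A : Matrix m n ℝ) : ℝ :=
  ‖(Matrix.toEuclideanLin A).toContinuousLinearMap‖

lemma sNorm_mulVec_bound {n : ℕ} (A : Matrix (Fin n) (Fin n) ℝ) (x : Fin n → ℝ) :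
    ∑ i, (A *ᵥ x) i ^ 2 ≤ sNorm A ^ 2 * ∑ i, x i ^ 2 := by
  set f := (Matrix.toEuclideanLin A).toContinuousLinearMap with hf
  set x' : EuclideanSpace ℝ (Fin n) := (WithLp.equiv 2 (Fin n → ℝ)).symm x with hx'
  have hnorm : ∀ y : Fin n → ℝ,
      ‖(WithLp.equiv 2 (Fin n → ℝ)).symm y‖ ^ 2 = ∑ i, y i ^ 2 := by
    intro y
    rw [EuclideanSpace.norm_eq, Real.sq_sqrt (by positivity)]
    simp [sq_abs]
  have h := f.le_opNorm x'
  have hfx : f x' = (WithLp.equiv 2 (Fin n → ℝ)).symm (A *ᵥ x) := rfl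
  have h2 : ‖f x'‖ ^ 2 ≤ (‖f‖ * ‖x'‖) ^ 2 := by
    apply pow_le_pow_left₀ (norm_nonneg _) h
  rw [hfx, hnorm] at h2
  calc ∑ i, (A *ᵥ x) i ^ 2 ≤ (‖f‖ * ‖x'‖) ^ 2 := h2
    _ = sNorm A ^ 2 * ∑ i, x i ^ 2 := by rw [mul_pow, hx', hnorm]; rfl

lemma abs_arctan (t : ℝ) : |Real.arctan t| = Real.arctan |t| := by
  rcases le_or_gt 0 t with h | h
  · rw [abs_of_nonneg h, abs_of_nonneg]
    rw [← Real.arctan_zero]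
    exact Real.arctan_strictMono.monotone h
  · rw [abs_of_neg h, abs_of_neg, ← Real.arctan_neg]
    rw [← Real.arctan_zero]
    exact Real.arctan_strictMono h

lemma arctan_lt_self {C : ℝ} (hC : 0 < C) : Real.arctan C < C := by
  rcases lt_or_ge C (Real.pi / 2) with h | h
  · calc Real.arctan C < Real.arctan (Real.tan C) :=
        Real.arctan_strictMono (Real.lt_tan hC h)
      _ = C := Real.arctan_tan (by linarith [Real.pi_pos]) h
  · exact lt_of_lt_of_le (Real.arctan_lt_pi_div_two C) h

lemma stmt6_C_pos {r : ℝ} (hr0 : 0 < r) (hr1 : r < 1) :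
    0 < r * Real.sqrt (1 - r ^ 2 / 4) / (1 - r ^ 2 / 2) := by
  have hq0 : (0:ℝ) < 1 - r ^ 2 / 4 := by nlinarith
  have hc0 : (0:ℝ) < 1 - r ^ 2 / 2 := by nlinarith
  exact div_pos (mul_pos hr0 (Real.sqrt_pos.mpr hq0)) hc0

lemma stmt6_real_bound {r x y : ℝ} (hr0 : 0 < r) (hr1 : r < 1)
    (h1 : x ^ 2 + y ^ 2 = 1) (h2 : (x - 1) ^ 2 + y ^ 2 < r ^ 2) :
    0 < x ∧ |y| / x ≤ r * Real.sqrt (1 - r ^ 2 / 4) / (1 - r ^ 2 / 2) := by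
  set c := 1 - r ^ 2 / 2 with hc
  have hc0 : 0 < c := by rw [hc]; nlinarith
  have hxc : c < x := by rw [hc]; nlinarith
  have hx0 : 0 < x := lt_trans hc0 hxc
  set N := r * Real.sqrt (1 - r ^ 2 / 4) with hN
  have hq0 : (0:ℝ) < 1 - r ^ 2 / 4 := by nlinarith
  have hN0 : 0 < N := by rw [hN]; positivity
  have hNsq : N ^ 2 = 1 - c ^ 2 := by
    rw [hN, mul_pow, Real.sq_sqrt hq0.le, hc]; ring
  have hyabs : |y| ≤ N := by
    have h4 : y ^ 2 ≤ N ^ 2 := by rw [hNsq]; nlinarith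
    calc |y| = Real.sqrt (y ^ 2) := (Real.sqrt_sq_eq_abs y).symm
      _ ≤ Real.sqrt (N ^ 2) := Real.sqrt_le_sqrt h4
      _ = N := by rw [Real.sqrt_sq hN0.le]
  refine ⟨hx0, ?_⟩
  rw [div_le_div_iff₀ hx0 hc0]
  calc |y| * c ≤ N * c := mul_le_mul_of_nonneg_right hyabs hc0.le
    _ ≤ N * x := mul_le_mul_of_nonneg_left hxc.le hN0.le

theorem stmt_6 (n : ℕ) (V : Matrix (Fin n) (Fin n) ℝ)
    (hV : Vᵀ * V = 1 ∧ V * Vᵀ = 1) (r : ℝ) (hr0 : 0 < r) (hr1 : r < 1)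
    (hVnorm : sNorm (V - 1) < r) (lam : ℂ)
    (hlam : ∃ v : Fin n → ℂ, v ≠ 0 ∧ (V.map ((↑) : ℝ → ℂ)) *ᵥ v = lam • v) :
    ‖lam‖ = 1 ∧
    |lam.arg| ≤ Real.arctan (r * Real.sqrt (1 - r ^ 2 / 4) / (1 - r ^ 2 / 2)) ∧
    Real.arctan (r * Real.sqrt (1 - r ^ 2 / 4) / (1 - r ^ 2 / 2)) <
      r * Real.sqrt (1 - r ^ 2 / 4) / (1 - r ^ 2 / 2) := by
  obtain ⟨v, hv0, hvev⟩ := hlam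
  set M := V.map ((↑) : ℝ → ℂ) with hMdef
  have hM : M = Complex.ofRealHom.mapMatrix V := rfl
  have hMH : Mᴴ = Complex.ofRealHom.mapMatrix Vᵀ := by
    ext i j
    simp [Matrix.conjTranspose_apply, hM]
  have hMHM : Mᴴ * M = 1 := by
    rw [hMH, hM, ← Complex.ofRealHom.mapMatrix.map_mul, hV.1,
      Complex.ofRealHom.mapMatrix.map_one]
  -- key dot product identities
  have key : star (M *ᵥ v) ⬝ᵥ (M *ᵥ v) = star v ⬝ᵥ v := by
    rw [star_mulVec, dotProduct_mulVec, vecMul_vecMul, hMHM, vecMul_one]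
  have key2 : star (M *ᵥ v) ⬝ᵥ (M *ᵥ v)
      = (Complex.normSq lam : ℂ) * (star v ⬝ᵥ v) := by
    rw [hvev, star_smul, smul_dotProduct, dotProduct_smul, smul_eq_mul, smul_eq_mul,
      ← mul_assoc]
    congr 1
    rw [Complex.star_def, Complex.normSq_eq_conj_mul_self]
  have hs : star v ⬝ᵥ v = ((∑ i, Complex.normSq (v i) : ℝ) : ℂ) := by
    push_cast
    simp [dotProduct, Complex.normSq_eq_conj_mul_self]
  obtain ⟨i0, hi0⟩ := Function.ne_iff.mp hv0
  have hi0' : v i0 ≠ 0 := by simpa using hi0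
  have hsum_pos : 0 < ∑ i, Complex.normSq (v i) := by
    apply Finset.sum_pos' (fun i _ => Complex.normSq_nonneg _)
    exact ⟨i0, Finset.mem_univ _, Complex.normSq_pos.mpr hi0'⟩
  have hsne : star v ⬝ᵥ v ≠ 0 := by
    rw [hs]
    exact_mod_cast hsum_pos.ne'
  have hns1 : Complex.normSq lam = 1 := by
    have h1 : (Complex.normSq lam : ℂ) * (star v ⬝ᵥ v) = star v ⬝ᵥ v :=
      key2.symm.trans key
    have h2 : ((Complex.normSq lam : ℂ) - 1) * (star v ⬝ᵥ v) = 0 := by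
      rw [sub_mul, one_mul, h1, sub_self]
    rcases mul_eq_zero.mp h2 with h | h
    · have h3 : (Complex.normSq lam : ℂ) = 1 := sub_eq_zero.mp h
      exact_mod_cast h3
    · exact absurd h hsne
  have habs : ‖lam‖ = 1 := by
    rw [Complex.norm_def, hns1, Real.sqrt_one]
  refine ⟨habs, ?_, ?_⟩
  · -- Step B: |lam - 1| < r (via normSq), then the arg bound
    set a : Fin n → ℝ := fun i => (v i).re with ha
    set b : Fin n → ℝ := fun i => (v i).im with hb
    set W := V - 1 with hWdef
    have hWv : (W.map ((↑) : ℝ → ℂ)) *ᵥ v = (lam - 1) • v := by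
      have hWm : W.map ((↑) : ℝ → ℂ) = M - 1 := by
        show Complex.ofRealHom.mapMatrix (V - 1) = M - 1
        rw [map_sub, Complex.ofRealHom.mapMatrix.map_one, hM]
      rw [hWm, Matrix.sub_mulVec, Matrix.one_mulVec, hvev, sub_smul, one_smul]
    have hcomp : ∀ i, ((W.map ((↑) : ℝ → ℂ)) *ᵥ v) i
        = ((W *ᵥ a) i : ℝ) + ((W *ᵥ b) i : ℝ) * Complex.I := by
      intro i
      simp only [Matrix.mulVec, dotProduct, Matrix.map_apply]
      rw [Complex.ext_iff]
      constructor
      · push_cast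
        simp [Complex.re_sum, Complex.mul_re]
        rfl
      · push_cast
        simp [Complex.im_sum, Complex.mul_im]
        rfl
    have hsumsq : Complex.normSq (lam - 1) * (∑ i, Complex.normSq (v i))
        = (∑ i, (W *ᵥ a) i ^ 2) + (∑ i, (W *ᵥ b) i ^ 2) := by
      have h1 : ∀ i, Complex.normSq (((lam - 1) • v) i)
          = Complex.normSq (lam - 1) * Complex.normSq (v i) := by
        intro i; simp [Complex.normSq_mul]
      calc Complex.normSq (lam - 1) * (∑ i, Complex.normSq (v i))
          = ∑ i, Complex.normSq (((lam - 1) • v) i) := by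
            rw [Finset.mul_sum]; exact (Finset.sum_congr rfl fun i _ => (h1 i)).symm
        _ = ∑ i, ((W *ᵥ a) i ^ 2 + (W *ᵥ b) i ^ 2) := by
            apply Finset.sum_congr rfl
            intro i _
            rw [← hWv, hcomp i, Complex.normSq_add_mul_I]
        _ = _ := by rw [Finset.sum_add_distrib]
    have hWa := sNorm_mulVec_bound W a
    have hWb := sNorm_mulVec_bound W b
    have hSsplit : ∑ i, Complex.normSq (v i) = (∑ i, a i ^ 2) + (∑ i, b i ^ 2) := by
      rw [← Finset.sum_add_distrib]
      apply Finset.sum_congr rfl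
      intro i _
      rw [Complex.normSq_apply]; ring
    have hsn0 : 0 ≤ sNorm W := norm_nonneg _
    have hsnr : sNorm W ^ 2 < r ^ 2 := by nlinarith
    have hlt : Complex.normSq (lam - 1) < r ^ 2 := by
      have h3 : Complex.normSq (lam - 1) * (∑ i, Complex.normSq (v i))
          < r ^ 2 * (∑ i, Complex.normSq (v i)) := by
        rw [hsumsq]
        calc (∑ i, (W *ᵥ a) i ^ 2) + (∑ i, (W *ᵥ b) i ^ 2)
            ≤ sNorm W ^ 2 * ((∑ i, a i ^ 2) + (∑ i, b i ^ 2)) := by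
              rw [mul_add]; exact add_le_add hWa hWb
          _ < r ^ 2 * ((∑ i, a i ^ 2) + (∑ i, b i ^ 2)) := by
              apply mul_lt_mul_of_pos_right hsnr
              rw [← hSsplit]; exact hsum_pos
          _ = r ^ 2 * (∑ i, Complex.normSq (v i)) := by rw [hSsplit]
      exact lt_of_mul_lt_mul_right h3 hsum_pos.le
    -- arithmetic on re/im
    have hxy1 : lam.re ^ 2 + lam.im ^ 2 = 1 := by
      rw [Complex.normSq_apply] at hns1; nlinarith [hns1]
    have hxy2 : (lam.re - 1) ^ 2 + lam.im ^ 2 < r ^ 2 := by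
      rw [Complex.normSq_apply, Complex.sub_re, Complex.sub_im, Complex.one_re,
        Complex.one_im] at hlt
      nlinarith [hlt]
    obtain ⟨hx0, hdiv⟩ := stmt6_real_bound hr0 hr1 hxy1 hxy2
    have hargeq : lam.arg = Real.arctan (lam.im / lam.re) := by
      have h5 : |lam.arg| < Real.pi / 2 :=
        Complex.abs_arg_lt_pi_div_two_iff.mpr (Or.inl hx0)
      have h6 := abs_lt.mp h5
      rw [← Complex.tan_arg lam, Real.arctan_tan (by linarith) h6.2]
    rw [hargeq, abs_arctan]
    apply Real.arctan_strictMono.monotone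
    rw [abs_div, abs_of_pos hx0]
    exact hdiv
  · exact arctan_lt_self (stmt6_C_pos hr0 hr1)
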